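/- arXiv:2303.11998 — 4 statements merged into one kernel-verified Lean document; each statement's English description precedes it below -/
import Mathlib

section
/- Let ρ₀ : 𝔾 → U(E₀) be a finite-dimensional unitary representation of a monoid 𝔾, let N₀ = dim(ρ₀(ℂ[𝔾])) (the span of the image of ρ₀ in End(E₀)), and let g₁,…,g_{N₀} ∈ 𝔾 be such that ρ₀(g₁),…,ρ₀(g_{N₀}) span ρ₀(ℂ[𝔾]). Then the N₀×N₀ matrix M₀ with entries (M₀)_{ij} = Tr(ρ₀(g_i g_j)) is invertible. -/
open scoped InnerProductSpace
theorem aux_trace_adjoint_mul_self {E : Type*} [NormedAddCommGroup E] [InnerProductSpace ℂ E]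
    [FiniteDimensional ℂ E] (f : E →ₗ[ℂ] E)
    (h : LinearMap.trace ℂ E (LinearMap.adjoint f * f) = 0) : f = 0 := by
  let b := stdOrthonormalBasis ℂ E
  have htr : LinearMap.trace ℂ E (LinearMap.adjoint f * f)
      = ∑ i, ⟪f (b i), f (b i)⟫_ℂ := by
    rw [LinearMap.trace_eq_matrix_trace ℂ b.toBasis, Matrix.trace]
    congr 1
    ext i
    rw [Matrix.diag_apply, LinearMap.toMatrix_apply, OrthonormalBasis.coe_toBasis,
      OrthonormalBasis.coe_toBasis_repr_apply, OrthonormalBasis.repr_apply_apply,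
      Module.End.mul_apply, LinearMap.adjoint_inner_right]
  rw [htr] at h
  have h' : ∑ i, (‖f (b i)‖ ^ 2 : ℝ) = 0 := by
    have h2 := congrArg Complex.re h
    rw [Complex.re_sum, Complex.zero_re] at h2
    rw [← h2]
    exact Finset.sum_congr rfl fun i _ => ((inner_self_eq_norm_sq (𝕜 := ℂ) (f (b i))).symm)
  have hz : ∀ i, f (b i) = 0 := by
    intro i
    have := (Finset.sum_eq_zero_iff_of_nonneg (fun i _ => by positivity)).mp h' i (Finset.mem_univ i)
    simpa [pow_eq_zero_iff, norm_eq_zero] using this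
  refine b.toBasis.ext fun i => ?_
  simp [OrthonormalBasis.coe_toBasis, hz i]




/-- For a finite-dimensional unitary representation `ρ₀` of a monoid `𝔾`, if
`ρ₀ g₁, …, ρ₀ g_{N₀}` span `ρ₀(ℂ[𝔾])` (the span of the image of `ρ₀`), where
`N₀ = dim ρ₀(ℂ[𝔾])`, then the matrix `(Tr (ρ₀ (gᵢ gⱼ)))_{ij}` is invertible. -/
theorem trace_matrix_invertible
    {G E₀ : Type*} [Monoid G]
    [NormedAddCommGroup E₀] [InnerProductSpace ℂ E₀] [FiniteDimensional ℂ E₀]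
    (ρ₀ : G →* (E₀ →ₗ[ℂ] E₀))
    (hρ₀ : ∀ g, LinearMap.adjoint (ρ₀ g) ∘ₗ ρ₀ g = LinearMap.id ∧
      ρ₀ g ∘ₗ LinearMap.adjoint (ρ₀ g) = LinearMap.id)
    (N₀ : ℕ)
    (hN₀ : N₀ = Module.finrank ℂ (Submodule.span ℂ (Set.range fun x : G => ρ₀ x)))
    (g : Fin N₀ → G)
    (hspan : Submodule.span ℂ (Set.range fun i : Fin N₀ => ρ₀ (g i)) =
      Submodule.span ℂ (Set.range fun x : G => ρ₀ x)) :
    IsUnit (Matrix.of fun i j : Fin N₀ => LinearMap.trace ℂ E₀ (ρ₀ (g i * g j))) := by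
  classical
  set S : Submodule ℂ (E₀ →ₗ[ℂ] E₀) := Submodule.span ℂ (Set.range fun x : G => ρ₀ x) with hS
  have hmem : ∀ x : G, ρ₀ x ∈ S := fun x => Submodule.subset_span ⟨x, rfl⟩
  -- S is closed under left multiplication by ρ₀ u
  have hmul : ∀ (u : G) {a : E₀ →ₗ[ℂ] E₀}, a ∈ S → ρ₀ u * a ∈ S := by
    intro u a ha
    induction ha using Submodule.span_induction with
    | mem x hx =>
      obtain ⟨y, rfl⟩ := hx
      have : ρ₀ u * ρ₀ y = ρ₀ (u * y) := (map_mul ρ₀ u y).symm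
      rw [this]; exact hmem _
    | zero => simpa using Submodule.zero_mem S
    | add x y hx hy hx' hy' => simpa [mul_add] using Submodule.add_mem S hx' hy'
    | smul c x hx hx' => simpa [mul_smul_comm] using Submodule.smul_mem S c hx'
  have hid : (1 : E₀ →ₗ[ℂ] E₀) ∈ S := by simpa using hmem 1
  -- adjoints of ρ₀ u lie in S
  have hadj : ∀ u : G, LinearMap.adjoint (ρ₀ u) ∈ S := by
    intro u
    set f : S →ₗ[ℂ] S :=
      LinearMap.codRestrict S ((LinearMap.mulLeft ℂ (ρ₀ u)) ∘ₗ S.subtype)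
        (fun a => hmul u a.2) with hf
    have hinj : Function.Injective f := by
      intro a b hab
      have h1 : ρ₀ u * (a : E₀ →ₗ[ℂ] E₀) = ρ₀ u * (b : E₀ →ₗ[ℂ] E₀) :=
        congrArg Subtype.val hab
      have h2 := congrArg (fun z => LinearMap.adjoint (ρ₀ u) * z) h1
      simp only [← mul_assoc] at h2
      have h3 : LinearMap.adjoint (ρ₀ u) * ρ₀ u = 1 := (hρ₀ u).1
      rw [h3, one_mul, one_mul] at h2
      exact Subtype.ext h2
    have hsurj : Function.Surjective f :=
      (LinearMap.injective_iff_surjective (f := f)).mp hinj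
    obtain ⟨a, ha⟩ := hsurj ⟨1, hid⟩
    have ha' : ρ₀ u * (a : E₀ →ₗ[ℂ] E₀) = 1 := congrArg Subtype.val ha
    have : LinearMap.adjoint (ρ₀ u) = (a : E₀ →ₗ[ℂ] E₀) := by
      have h3 : LinearMap.adjoint (ρ₀ u) * ρ₀ u = 1 := (hρ₀ u).1
      calc LinearMap.adjoint (ρ₀ u)
          = LinearMap.adjoint (ρ₀ u) * (ρ₀ u * (a : E₀ →ₗ[ℂ] E₀)) := by rw [ha', mul_one]
        _ = (LinearMap.adjoint (ρ₀ u) * ρ₀ u) * (a : E₀ →ₗ[ℂ] E₀) := by rw [mul_assoc]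
        _ = (a : E₀ →ₗ[ℂ] E₀) := by rw [h3, one_mul]
    rw [this]; exact a.2
  -- S closed under adjoint
  have hadjS : ∀ Y ∈ S, LinearMap.adjoint Y ∈ S := by
    intro Y hY
    induction hY using Submodule.span_induction with
    | mem x hx => obtain ⟨y, rfl⟩ := hx; exact hadj y
    | zero => simpa using Submodule.zero_mem S
    | add x y hx hy hx' hy' => rw [map_add]; exact Submodule.add_mem S hx' hy'
    | smul c x hx hx' =>
      rw [map_smulₛₗ]
      exact Submodule.smul_mem S _ hx'
  -- now the matrix argument
  rw [Matrix.isUnit_iff_isUnit_det, isUnit_iff_ne_zero]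
  intro hdet
  obtain ⟨c, hc0, hc⟩ := (Matrix.exists_mulVec_eq_zero_iff).mpr hdet
  set Y : E₀ →ₗ[ℂ] E₀ := ∑ j, c j • ρ₀ (g j) with hYdef
  have hY : Y ∈ S := Submodule.sum_mem S fun j _ => Submodule.smul_mem S _ (hmem _)
  have htr : ∀ Z ∈ S, LinearMap.trace ℂ E₀ (Z * Y) = 0 := by
    intro Z hZ
    have hZ' : Z ∈ Submodule.span ℂ (Set.range fun i : Fin N₀ => ρ₀ (g i)) := by
      rw [hspan]; exact hZ
    clear hZ
    induction hZ' using Submodule.span_induction with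
    | mem x hx =>
      obtain ⟨i, rfl⟩ := hx
      have hci := congrFun hc i
      simp only [Matrix.mulVec, dotProduct, Matrix.of_apply, Pi.zero_apply] at hci
      calc LinearMap.trace ℂ E₀ (ρ₀ (g i) * Y)
          = ∑ j, c j * LinearMap.trace ℂ E₀ (ρ₀ (g i) * ρ₀ (g j)) := by
            rw [hYdef, Finset.mul_sum, map_sum]
            exact Finset.sum_congr rfl fun j _ => by
              rw [mul_smul_comm, map_smul, smul_eq_mul]
        _ = ∑ j, LinearMap.trace ℂ E₀ (ρ₀ (g i * g j)) * c j := by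
            exact Finset.sum_congr rfl fun j _ => by rw [← map_mul ρ₀, mul_comm]
        _ = 0 := hci
    | zero => simp
    | add x y hx hy hx' hy' => rw [add_mul, map_add, hx', hy', add_zero]
    | smul a x hx hx' => rw [smul_mul_assoc, map_smul, hx', smul_zero]
  have hYz : Y = 0 :=
    aux_trace_adjoint_mul_self Y (htr _ (hadjS Y hY))
  -- linear independence of the ρ₀ (g i) gives c = 0, contradiction
  let w : Fin N₀ → S := fun i => ⟨ρ₀ (g i), hmem _⟩
  have hwspan : ⊤ ≤ Submodule.span ℂ (Set.range w) := by
    have hmap : Submodule.map S.subtype (Submodule.span ℂ (Set.range w))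
        = Submodule.map S.subtype ⊤ := by
      rw [Submodule.map_span, Submodule.map_subtype_top, ← Set.range_comp]
      have : (S.subtype ∘ w) = fun i : Fin N₀ => ρ₀ (g i) := rfl
      rw [this, hspan]
    exact le_of_eq ((Submodule.map_injective_of_injective S.injective_subtype hmap).symm)
  have hcard : Fintype.card (Fin N₀) = Module.finrank ℂ S := by
    simpa using hN₀
  have hindep : LinearIndependent ℂ w :=
    linearIndependent_of_top_le_span_of_card_eq_finrank hwspan hcard
  have hsum : ∑ j, c j • w j = 0 := by
    apply Subtype.ext
    push_cast
    simpa using hYz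
  have : ∀ j, c j = 0 := by
    have := linearIndependent_iff'.mp hindep Finset.univ c (by simpa using hsum)
    exact fun j => this j (Finset.mem_univ j)
  exact hc0 (funext this)
end

section
/- Let E be an n-dimensional complex inner product space and let u ∈ U(E) be unitary. For every integer N > n there exists j ∈ {1, …, Nⁿ} such that ‖uʲ − id‖ ≤ 3π/N in operator norm. -/
open scoped ComplexOrder

open Complex Real

lemma exp_I_sub_one_abs (θ : ℝ) :
    ‖Complex.exp (θ * Complex.I) - 1‖ ≤ |θ| := by
  have hre : (Complex.exp (↑θ * I) - 1).re = Real.cos θ - 1 := by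
    simp [Complex.exp_ofReal_mul_I_re]
  have him : (Complex.exp (↑θ * I) - 1).im = Real.sin θ := by
    simp [Complex.exp_ofReal_mul_I_im]
  rw [Complex.norm_def, Complex.normSq_apply, hre, him]
  have e1 := Real.sin_sq_add_cos_sq θ
  have e2 := Real.one_sub_sq_div_two_le_cos (x := θ)
  have h2 : (Real.cos θ - 1) * (Real.cos θ - 1) + Real.sin θ * Real.sin θ ≤ θ ^ 2 := by
    nlinarith [e1, e2]
  calc Real.sqrt _ ≤ Real.sqrt (θ ^ 2) := Real.sqrt_le_sqrt h2
    _ = |θ| := Real.sqrt_sq_eq_abs θ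

lemma exp_I_dist (a b : ℝ) :
    ‖Complex.exp (a * Complex.I) - Complex.exp (b * Complex.I)‖ ≤ |a - b| := by
  have h1 : Complex.exp (↑a * I) - Complex.exp (↑b * I)
      = Complex.exp (↑b * I) * (Complex.exp (↑(a - b) * I) - 1) := by
    rw [mul_sub, ← Complex.exp_add, mul_one]
    push_cast
    ring_nf
  rw [h1, norm_mul, Complex.norm_exp_ofReal_mul_I, one_mul]
  exact exp_I_sub_one_abs (a - b)

/-- Wrap-around case: `a = π` and `b` close to `-π`. -/
lemma wrap_case {N : ℕ} (hN : 0 < N) {a b : ℝ} (ha : a = Real.pi)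
    (hb : -Real.pi < b) (hb2 : (b + Real.pi) * N < 2 * Real.pi) :
    ‖Complex.exp (a * Complex.I) - Complex.exp (b * Complex.I)‖
      ≤ 2 * Real.pi / N := by
  have hper : Complex.exp (↑(a - 2 * Real.pi) * I) = Complex.exp (↑a * I) := by
    push_cast
    rw [sub_mul, Complex.exp_sub]
    norm_num [Complex.exp_two_pi_mul_I]
  calc ‖Complex.exp (↑a * I) - Complex.exp (↑b * I)‖
      = ‖Complex.exp (↑(a - 2 * Real.pi) * I) - Complex.exp (↑b * I)‖ := by
        rw [hper]
    _ ≤ |a - 2 * Real.pi - b| := exp_I_dist _ _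
    _ ≤ 2 * Real.pi / N := by
        have hN' : (0 : ℝ) < N := by exact_mod_cast hN
        have hpos : (0:ℝ) < 2 * Real.pi / N := div_pos (by linarith [Real.pi_pos]) hN'
        rw [abs_le]
        constructor
        · rw [neg_le, ha]
          have : Real.pi + b ≤ 2 * Real.pi / N := by
            rw [le_div_iff₀ hN']
            nlinarith
          linarith
        · have : a - 2 * Real.pi - b < 0 := by
            rw [ha]; linarith [Real.pi_pos]
          linarith

lemma box_lemma {N : ℕ} (hN : 0 < N) {z w : ℂ} (hz : ‖z‖ = 1)
    (hw : ‖w‖ = 1)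
    (h : (⌊(z.arg + Real.pi) * N / (2 * Real.pi)⌋.toNat) % N
       = (⌊(w.arg + Real.pi) * N / (2 * Real.pi)⌋.toNat) % N) :
    ‖z - w‖ ≤ 2 * Real.pi / N := by
  have hN' : (0 : ℝ) < N := by exact_mod_cast hN
  have hπ := Real.pi_pos
  -- write z, w as exponentials
  have hz' : z = Complex.exp (↑z.arg * I) := by
    conv_lhs => rw [← Complex.norm_mul_exp_arg_mul_I z]
    rw [hz]; simp
  have hw' : w = Complex.exp (↑w.arg * I) := by
    conv_lhs => rw [← Complex.norm_mul_exp_arg_mul_I w]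
    rw [hw]; simp
  set a := z.arg with ha_def
  set b := w.arg with hb_def
  have ha1 : -Real.pi < a := Complex.neg_pi_lt_arg z
  have ha2 : a ≤ Real.pi := Complex.arg_le_pi z
  have hb1 : -Real.pi < b := Complex.neg_pi_lt_arg w
  have hb2 : b ≤ Real.pi := Complex.arg_le_pi w
  set x := (a + Real.pi) * N / (2 * Real.pi) with hx_def
  set y := (b + Real.pi) * N / (2 * Real.pi) with hy_def
  have hx0 : 0 < x := by
    apply div_pos (by nlinarith) (by linarith)
  have hy0 : 0 < y := by
    apply div_pos (by nlinarith) (by linarith)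
  have hxN : x ≤ N := by
    rw [hx_def, div_le_iff₀ (by linarith)]
    nlinarith
  have hyN : y ≤ N := by
    rw [hy_def, div_le_iff₀ (by linarith)]
    nlinarith
  have hfx0 : 0 ≤ ⌊x⌋ := Int.floor_nonneg.2 hx0.le
  have hfy0 : 0 ≤ ⌊y⌋ := Int.floor_nonneg.2 hy0.le
  have hfxN : ⌊x⌋.toNat ≤ N := by
    have : ⌊x⌋ ≤ (N : ℤ) := by
      have := Int.floor_le_floor hxN
      rwa [Int.floor_natCast] at this
    omega
  have hfyN : ⌊y⌋.toNat ≤ N := by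
    have : ⌊y⌋ ≤ (N : ℤ) := by
      have := Int.floor_le_floor hyN
      rwa [Int.floor_natCast] at this
    omega
  -- trichotomy
  have tri : ⌊x⌋ = ⌊y⌋ ∨ (⌊x⌋.toNat = N ∧ ⌊y⌋.toNat = 0) ∨ (⌊x⌋.toNat = 0 ∧ ⌊y⌋.toNat = N) := by
    rcases eq_or_lt_of_le hfxN with hm | hm
    · rcases eq_or_lt_of_le hfyN with hp | hp
      · left; omega
      · rw [hm, Nat.mod_self, Nat.mod_eq_of_lt hp] at h
        right; left; exact ⟨hm, h.symm⟩
    · rcases eq_or_lt_of_le hfyN with hp | hp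
      · rw [hp, Nat.mod_self, Nat.mod_eq_of_lt hm] at h
        right; right; exact ⟨h, hp⟩
      · rw [Nat.mod_eq_of_lt hm, Nat.mod_eq_of_lt hp] at h
        left; omega
  rcases tri with heq | ⟨hxe, hye⟩ | ⟨hxe, hye⟩
  · -- same box: |x - y| < 1
    have hxy : |x - y| < 1 := by
      have f1 := Int.floor_le x
      have f2 := Int.lt_floor_add_one x
      have f3 := Int.floor_le y
      have f4 := Int.lt_floor_add_one y
      rw [abs_sub_lt_iff]
      constructor <;> [skip; skip] <;> rw [heq] at * <;> linarith
    have hab : |a - b| ≤ 2 * Real.pi / N := by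
      have hab_eq : a - b = (x - y) * (2 * Real.pi / N) := by
        rw [hx_def, hy_def]
        field_simp
        ring
      rw [hab_eq, abs_mul, abs_of_pos (show (0:ℝ) < 2 * Real.pi / N from div_pos (by linarith) hN')]
      calc |x - y| * (2 * Real.pi / N) ≤ 1 * (2 * Real.pi / N) := by
            apply mul_le_mul_of_nonneg_right hxy.le (by positivity)
        _ = 2 * Real.pi / N := one_mul _
    rw [hz', hw']
    exact (exp_I_dist a b).trans hab
  · -- x = N exactly, so a = π; y small
    have hxN' : (N : ℝ) ≤ x := by
      have : (N : ℤ) ≤ ⌊x⌋ := by omega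
      calc (N : ℝ) = ((N : ℤ) : ℝ) := by push_cast; ring
        _ ≤ (⌊x⌋ : ℝ) := by exact_mod_cast this
        _ ≤ x := Int.floor_le x
    have hxeq : x = N := le_antisymm hxN hxN'
    have haπ : a = Real.pi := by
      have : (a + Real.pi) * N = 2 * Real.pi * N := by
        have := hxeq
        rw [hx_def, div_eq_iff (by linarith : (2:ℝ) * Real.pi ≠ 0)] at this
        linarith [this]
      nlinarith
    have hy1 : y < 1 := by
      have : (⌊y⌋ : ℝ) ≤ 0 := by
        have : ⌊y⌋ = 0 := by omega
        rw [this]; norm_num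
      have := Int.lt_floor_add_one y
      linarith
    have hb2' : (b + Real.pi) * N < 2 * Real.pi := by
      rw [hy_def, div_lt_one (by linarith)] at hy1
      linarith
    rw [hz', hw']
    exact wrap_case hN haπ hb1 hb2'
  · -- symmetric
    have hyN' : (N : ℝ) ≤ y := by
      have : (N : ℤ) ≤ ⌊y⌋ := by omega
      calc (N : ℝ) = ((N : ℤ) : ℝ) := by push_cast; ring
        _ ≤ (⌊y⌋ : ℝ) := by exact_mod_cast this
        _ ≤ y := Int.floor_le y
    have hyeq : y = N := le_antisymm hyN hyN'
    have hbπ : b = Real.pi := by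
      have : (b + Real.pi) * N = 2 * Real.pi * N := by
        have := hyeq
        rw [hy_def, div_eq_iff (by linarith : (2:ℝ) * Real.pi ≠ 0)] at this
        linarith [this]
      nlinarith
    have hx1 : x < 1 := by
      have : (⌊x⌋ : ℝ) ≤ 0 := by
        have : ⌊x⌋ = 0 := by omega
        rw [this]; norm_num
      have := Int.lt_floor_add_one x
      linarith
    have ha2' : (a + Real.pi) * N < 2 * Real.pi := by
      rw [hx_def, div_lt_one (by linarith)] at hx1
      linarith
    rw [hz', hw', norm_sub_rev]
    exact wrap_case hN hbπ ha1 ha2'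

/-- Pigeonhole for powers of a unitary operator on an `n`-dimensional complex inner
product space: for every `N > n` there is `1 ≤ j ≤ N^n` with `‖uʲ − id‖ ≤ 3π/N`. -/
theorem unitary_power_close_to_id
    {E : Type*} [NormedAddCommGroup E] [InnerProductSpace ℂ E] [FiniteDimensional ℂ E]
    (u : E →L[ℂ] E) (hu : u ∈ unitary (E →L[ℂ] E))
    (N : ℕ) (hN : Module.finrank ℂ E < N) :
    ∃ j : ℕ, 1 ≤ j ∧ j ≤ N ^ Module.finrank ℂ E ∧
      ‖u ^ j - 1‖ ≤ 3 * Real.pi / N := by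
  classical
  set n := Module.finrank ℂ E with hn
  have hN0 : 0 < N := lt_of_le_of_lt (Nat.zero_le _) hN
  have hN' : (0:ℝ) < N := by exact_mod_cast hN0
  have hπ := Real.pi_pos
  -- the algebra equivalence with `Module.End`
  let e : (E →L[ℂ] E) ≃ₐ[ℂ] (Module.End ℂ E) :=
    AlgEquiv.ofLinearEquiv (LinearMap.toContinuousLinearMap.symm) rfl (fun x y => rfl)
  have hS_eq : spectrum ℂ (e u) = spectrum ℂ u := AlgEquiv.spectrum_eq e u
  have hfin : (spectrum ℂ u).Finite := hS_eq ▸ Module.End.finite_spectrum (e u)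
  set S : Set ℂ := spectrum ℂ u with hS
  haveI : Fintype S := hfin.fintype
  -- the spectrum has at most `n` elements
  have hev : ∀ μ : S, Module.End.HasEigenvalue (e u) μ := fun μ =>
    Module.End.hasEigenvalue_iff_mem_spectrum.mpr (by rw [hS_eq]; exact μ.2)
  choose v hv using fun μ : S => (hev μ).exists_hasEigenvector
  have hli := Module.End.eigenvectors_linearIndependent (e u) S v hv
  have hcard : Fintype.card S ≤ n := hli.fintype_card_le_finrank
  -- pigeonhole
  let box : ℂ → Fin N := fun z =>
    ⟨⌊(z.arg + Real.pi) * N / (2 * Real.pi)⌋.toNat % N, Nat.mod_lt _ hN0⟩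
  let F : Fin (N ^ n + 1) → (S → Fin N) := fun k μ => box ((μ : ℂ) ^ (k : ℕ))
  have hcard2 : Fintype.card (S → Fin N) < Fintype.card (Fin (N ^ n + 1)) := by
    rw [Fintype.card_fun, Fintype.card_fin, Fintype.card_fin]
    calc N ^ Fintype.card S ≤ N ^ n := Nat.pow_le_pow_right hN0 hcard
      _ < N ^ n + 1 := Nat.lt_succ_self _
  obtain ⟨k, l, hkl, hF⟩ := Fintype.exists_ne_map_eq_of_card_lt F hcard2
  -- unitarity facts
  obtain ⟨hu1, hu2⟩ := Unitary.mem_iff.mp hu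
  have hcomm : Commute u (star u) := hu2.trans hu1.symm
  have key : ∀ k l : Fin (N ^ n + 1), (k : ℕ) < (l : ℕ) → F k = F l →
      ∃ j : ℕ, 1 ≤ j ∧ j ≤ N ^ n ∧ ‖u ^ j - 1‖ ≤ 3 * Real.pi / N := by
    intro k l hkl hF
    set j : ℕ := (l : ℕ) - (k : ℕ) with hj
    have hj1 : 1 ≤ j := by omega
    have hjN : j ≤ N ^ n := by
      have := l.isLt
      omega
    refine ⟨j, hj1, hjN, ?_⟩
    -- star-normality of `u ^ j - 1`
    have h1 : (star u) ^ j * u ^ j = 1 := by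
      rw [← Commute.mul_pow hcomm.symm, hu1, one_pow]
    have h2 : u ^ j * (star u) ^ j = 1 := by
      rw [← Commute.mul_pow hcomm, hu2, one_pow]
    haveI : IsStarNormal (u ^ j - 1) := by
      constructor
      show star (u ^ j - 1) * (u ^ j - 1) = (u ^ j - 1) * star (u ^ j - 1)
      rw [star_sub, star_one, star_pow]
      have expand : ∀ a b : E →L[ℂ] E, (a - 1) * (b - 1) = a * b - a - b + 1 := by
        intros a b; noncomm_ring
      rw [expand, expand, h1, h2]
      abel
    -- spectral mapping
    have hσ : spectrum ℂ (u ^ j - 1) = (fun μ : ℂ => μ ^ j - 1) '' spectrum ℂ u := by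
      have hdeg : 0 < (Polynomial.X ^ j - 1 : Polynomial ℂ).degree := by
        have h1C : (1 : Polynomial ℂ) = Polynomial.C 1 := by rw [map_one]
        rw [h1C, Polynomial.degree_X_pow_sub_C (by omega : 0 < j)]
        exact_mod_cast (by omega : 0 < j)
      have hmap := spectrum.map_polynomial_aeval_of_degree_pos u
        (Polynomial.X ^ j - 1) hdeg
      simpa using hmap
    -- each spectral value is small
    have hball : ∀ ν ∈ spectrum ℂ (u ^ j - 1), ‖ν‖ ≤ 2 * Real.pi / N := by
      rw [hσ]
      rintro ν ⟨μ, hμ, rfl⟩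
      have habs : ‖μ‖ = 1 := by
        have hsph := spectrum.subset_circle_of_unitary hu hμ
        simpa using (mem_sphere_zero_iff_norm.mp hsph)
      have hz1 : ‖μ ^ (l : ℕ)‖ = 1 := by rw [norm_pow, habs, one_pow]
      have hz2 : ‖μ ^ (k : ℕ)‖ = 1 := by rw [norm_pow, habs, one_pow]
      have hbox := congrFun hF (⟨μ, hμ⟩ : S)
      have hmod := congrArg Fin.val hbox
      simp only [F, box] at hmod
      have hbl := box_lemma hN0 hz1 hz2 hmod.symm
      have hkj : (k : ℕ) + j = (l : ℕ) := by omega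
      have hfact : μ ^ (l : ℕ) - μ ^ (k : ℕ) = μ ^ (k : ℕ) * (μ ^ j - 1) := by
        rw [mul_sub, mul_one, ← pow_add, hkj]
      rw [hfact, norm_mul, hz2, one_mul] at hbl
      calc ‖μ ^ j - 1‖ = ‖μ ^ j - 1‖ := rfl
        _ ≤ 2 * Real.pi / N := hbl
    -- spectral radius and the norm
    have hsr : spectralRadius ℂ (u ^ j - 1) ≤ ENNReal.ofReal (2 * Real.pi / N) := by
      unfold spectralRadius
      refine iSup₂_le fun ν hν => ?_
      rw [← enorm_eq_nnnorm, ← ofReal_norm]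
      exact ENNReal.ofReal_le_ofReal (hball ν hν)
    rw [IsStarNormal.spectralRadius_eq_nnnorm (u ^ j - 1)] at hsr
    rw [← enorm_eq_nnnorm, ← ofReal_norm] at hsr
    have hnorm : ‖u ^ j - 1‖ ≤ 2 * Real.pi / N :=
      (ENNReal.ofReal_le_ofReal_iff (by positivity)).mp hsr
    calc ‖u ^ j - 1‖ ≤ 2 * Real.pi / N := hnorm
      _ ≤ 3 * Real.pi / N := by
        gcongr
        linarith
  rcases hkl.lt_or_gt with h | h
  · exact key k l h hF
  · exact key l k h hF.symm
end

section
/- Let E₀, E be finite-dimensional complex inner product spaces of equal dimension and let Q : E₀ → E be a linear map satisfying ‖Q*Q − id_{E₀}‖ ≤ δ in operator norm, with δ < 1. Then Q is invertible, the unitarisation P⁻¹ := Q(Q*Q)^{-1/2} is a well-defined unitary map E₀ → E, and for every operator B on E and every operator B₀ on E₀ satisfying ‖Q B₀ − B Q‖ ≤ δ and ‖B‖ ≤ 1, ‖B₀‖ ≤ 1, one has ‖P⁻¹ B₀ P − B‖ ≤ Cδ for a constant C depending only on the dimension. -/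
set_option maxHeartbeats 2000000 in
/-- Unitarisation of an approximate unitary: if `‖Q*Q − id‖ ≤ δ < 1` then `Q` is
invertible, the positive square root `S = (Q*Q)^{1/2}` exists and is invertible, the
unitarisation `P⁻¹ = Q S⁻¹` (equivalently `P⁻¹ S = Q`) is a well-defined unitary map
`E₀ → E`, and conjugation by `P` approximately intertwines operators that `Q`
approximately intertwines, with a constant depending only on the dimension. -/
theorem unitarisation_of_approximate_unitary (n : ℕ) :
    ∃ C > 0, ∀ (E₀ E : Type)
      [NormedAddCommGroup E₀] [InnerProductSpace ℂ E₀] [FiniteDimensional ℂ E₀]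
      [NormedAddCommGroup E] [InnerProductSpace ℂ E] [FiniteDimensional ℂ E],
      Module.finrank ℂ E₀ = n → Module.finrank ℂ E = n →
      ∀ (Q : E₀ →L[ℂ] E) (δ : ℝ), δ < 1 →
      ‖ContinuousLinearMap.adjoint Q ∘L Q - 1‖ ≤ δ →
      Function.Bijective Q ∧
      ∃ S : E₀ →L[ℂ] E₀, IsSelfAdjoint S ∧ (∀ x : E₀, 0 ≤ ((inner ℂ x (S x) : ℂ)).re) ∧
        S ∘L S = ContinuousLinearMap.adjoint Q ∘L Q ∧ IsUnit S ∧
        ∃ P : E ≃ₗᵢ[ℂ] E₀,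
          P.symm.toContinuousLinearEquiv.toContinuousLinearMap ∘L S = Q ∧
          ∀ (B : E →L[ℂ] E) (B₀ : E₀ →L[ℂ] E₀),
            ‖Q ∘L B₀ - B ∘L Q‖ ≤ δ → ‖B‖ ≤ 1 → ‖B₀‖ ≤ 1 →
            ‖P.symm.toContinuousLinearEquiv.toContinuousLinearMap ∘L B₀ ∘L
                P.toContinuousLinearEquiv.toContinuousLinearMap - B‖ ≤ C * δ := by
  refine ⟨20, by norm_num, ?_⟩
  intro E₀ E _ _ _ _ _ _ hE₀ hE Q δ hδ1 hQδ
  have hδ0 : 0 ≤ δ := le_trans (norm_nonneg _) hQδ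
  set a : E₀ →L[ℂ] E₀ := ContinuousLinearMap.adjoint Q ∘L Q with ha_def
  have ha : IsSelfAdjoint a := by
    rw [IsSelfAdjoint, ContinuousLinearMap.star_eq_adjoint, ha_def,
      ContinuousLinearMap.adjoint_comp, ContinuousLinearMap.adjoint_adjoint]
  -- spectrum bound
  have hspec : ∀ t ∈ spectrum ℝ a, |t - 1| ≤ δ := by
    intro t ht
    rcases subsingleton_or_nontrivial E₀ with h | h
    · exact absurd (isUnit_of_subsingleton _) (spectrum.mem_iff.mp ht)
    · have h1 : t - 1 ∈ spectrum ℝ (a - algebraMap ℝ _ 1) := by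
        rw [← spectrum.sub_singleton_eq]
        exact Set.sub_mem_sub ht rfl
      have h2 := spectrum.norm_le_norm_of_mem h1
      rw [map_one] at h2
      calc |t - 1| = ‖t - 1‖ := rfl
        _ ≤ ‖a - 1‖ := h2
        _ ≤ δ := hQδ
  have hpos : ∀ t ∈ spectrum ℝ a, (0 : ℝ) < t := by
    intro t ht
    have h1 := (abs_le.mp (hspec t ht)).1
    linarith
  -- the square root
  set S : E₀ →L[ℂ] E₀ := cfc Real.sqrt a with hS_def
  have hSsa : IsSelfAdjoint S := cfc_predicate _ _
  have hcs : ContinuousOn Real.sqrt (spectrum ℝ a) := Real.continuous_sqrt.continuousOn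
  have hSS : S * S = a := by
    rw [hS_def, ← cfc_mul _ _ a hcs hcs]
    calc cfc (fun t : ℝ => Real.sqrt t * Real.sqrt t) a = cfc (fun t : ℝ => t) a :=
          cfc_congr fun t ht => Real.mul_self_sqrt (hpos t ht).le
      _ = a := cfc_id' ℝ a
  -- a is a unit
  have haU : IsUnit a := by
    have h1 : ‖(1 : E₀ →L[ℂ] E₀) - a‖ < 1 := by
      rw [norm_sub_rev]; exact lt_of_le_of_lt hQδ hδ1
    exact ⟨Units.oneSub _ h1, by simp [Units.oneSub]⟩
  obtain ⟨ua, hua⟩ := haU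
  have hcomm : Commute S (↑ua : E₀ →L[ℂ] E₀) := by
    rw [hua]; show S * a = a * S
    rw [← hSS]; exact (mul_assoc S S S).symm
  have hcS : Commute S ↑ua⁻¹ := hcomm.units_inv_right
  set uS : (E₀ →L[ℂ] E₀)ˣ :=
    ⟨S, ↑ua⁻¹ * S,
      by rw [← mul_assoc, hcS.eq, mul_assoc, hSS, ← hua, Units.inv_mul],
      by rw [mul_assoc, hSS, ← hua, Units.inv_mul]⟩ with huS_def
  have huS : IsUnit S := ⟨uS, rfl⟩
  set W : E₀ →L[ℂ] E₀ := ↑uS⁻¹ with hW_def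
  have hWmulS : W * S = 1 := uS.inv_mul
  have hSmulW : S * W = 1 := uS.mul_inv
  have hWS : ∀ y, W (S y) = y := by
    intro y
    have h := congrArg (fun f : E₀ →L[ℂ] E₀ => f y) hWmulS
    simpa [ContinuousLinearMap.mul_apply] using h
  have hSW : ∀ y, S (W y) = y := by
    intro y
    have h := congrArg (fun f : E₀ →L[ℂ] E₀ => f y) hSmulW
    simpa [ContinuousLinearMap.mul_apply] using h
  -- norm of S - 1
  have hS1 : ‖S - 1‖ ≤ δ := by
    have e1 : cfc (fun t : ℝ => Real.sqrt t - 1) a = S - 1 := by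
      rw [cfc_sub _ _, cfc_const 1 a ha, map_one]
    rw [← e1]
    refine norm_cfc_le hδ0 fun t ht => ?_
    have h1 := hspec t ht
    have h0 := (hpos t ht).le
    have hsq := Real.sq_sqrt h0
    have hnn := Real.sqrt_nonneg t
    rw [Real.norm_eq_abs]
    calc |Real.sqrt t - 1| ≤ |Real.sqrt t - 1| * |Real.sqrt t + 1| := by
          refine le_mul_of_one_le_right (abs_nonneg _) ?_
          rw [abs_of_nonneg (by linarith)]; linarith
      _ = |t - 1| := by rw [← abs_mul]; congr 1; nlinarith
      _ ≤ δ := h1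
  -- positivity of S
  have hinner : ∀ x : E₀, 0 ≤ ((inner ℂ x (S x) : ℂ)).re := by
    set R : E₀ →L[ℂ] E₀ := cfc (fun t : ℝ => Real.sqrt (Real.sqrt t)) a with hR_def
    have hcr : ContinuousOn (fun t : ℝ => Real.sqrt (Real.sqrt t)) (spectrum ℝ a) :=
      (Real.continuous_sqrt.comp Real.continuous_sqrt).continuousOn
    have hRR : R * R = S := by
      rw [hR_def, hS_def, ← cfc_mul _ _ a hcr hcr]
      exact cfc_congr fun t ht => Real.mul_self_sqrt (Real.sqrt_nonneg t)
    have hRsa : IsSelfAdjoint R := cfc_predicate _ _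
    intro x
    have h1 : (inner ℂ x (S x) : ℂ) = inner ℂ (R x) (R x) := by
      conv_lhs => rw [← hRR]
      rw [show (R * R) x = R (R x) from rfl]
      rw [show R (R x) = (ContinuousLinearMap.adjoint R) (R x) by
        rw [← ContinuousLinearMap.star_eq_adjoint, hRsa.star_eq]]
      exact ContinuousLinearMap.adjoint_inner_right R x (R x)
    rw [h1]
    simpa using inner_self_nonneg (𝕜 := ℂ) (x := R x)
  -- the unitary
  set U : E₀ →L[ℂ] E := Q ∘L W with hU_def
  have hUnorm : ∀ x, ‖U x‖ = ‖x‖ := by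
    intro x
    have h1 : (inner ℂ (U x) (U x) : ℂ) = inner ℂ x x := by
      calc (inner ℂ (U x) (U x) : ℂ) = inner ℂ (W x) (a (W x)) := by
            rw [hU_def, ha_def]
            exact (ContinuousLinearMap.adjoint_inner_right Q (W x) (Q (W x))).symm
        _ = inner ℂ (W x) (S x) := by
            rw [show a (W x) = S (S (W x)) by rw [← hSS]; rfl, hSW]
        _ = inner ℂ (S (W x)) x := by
            rw [show S (W x) = (ContinuousLinearMap.adjoint S) (W x) by
              rw [← ContinuousLinearMap.star_eq_adjoint, hSsa.star_eq]]
            exact (ContinuousLinearMap.adjoint_inner_left S x (W x)).symm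
        _ = inner ℂ x x := by rw [hSW]
    rw [inner_self_eq_norm_sq_to_K, inner_self_eq_norm_sq_to_K] at h1
    have h3 : ‖U x‖ ^ 2 = ‖x‖ ^ 2 := by exact_mod_cast h1
    calc ‖U x‖ = Real.sqrt (‖U x‖ ^ 2) := (Real.sqrt_sq (norm_nonneg _)).symm
      _ = Real.sqrt (‖x‖ ^ 2) := by rw [h3]
      _ = ‖x‖ := Real.sqrt_sq (norm_nonneg _)
  set Ui : E₀ →ₗᵢ[ℂ] E := ⟨(U : E₀ →ₗ[ℂ] E), hUnorm⟩ with hUi_def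
  have hsurj : Function.Surjective Ui := by
    have h := (LinearMap.injective_iff_surjective_of_finrank_eq_finrank
      (f := Ui.toLinearMap) (by rw [hE₀, hE])).mp Ui.injective
    exact h
  set V : E₀ ≃ₗᵢ[ℂ] E := LinearIsometryEquiv.ofSurjective Ui hsurj with hV_def
  set P : E ≃ₗᵢ[ℂ] E₀ := V.symm with hP_def
  have hT : ∀ y, (P.symm.toContinuousLinearEquiv.toContinuousLinearMap : E₀ →L[ℂ] E) y = U y :=
    fun y => rfl
  have hPcc : ∀ x, (P.toContinuousLinearEquiv.toContinuousLinearMap : E →L[ℂ] E₀) x = V.symm x :=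
    fun x => rfl
  have hUP : ∀ x : E, U (V.symm x) = x := fun x => V.apply_symm_apply x
  have hPcnorm : ∀ x : E, ‖V.symm x‖ = ‖x‖ := fun x => V.symm.norm_map x
  have hPS : P.symm.toContinuousLinearEquiv.toContinuousLinearMap ∘L S = Q := by
    ext x
    rw [ContinuousLinearMap.comp_apply, hT]
    show Q (W (S x)) = Q x
    rw [hWS]
  -- bijectivity of Q
  have hax : ∀ z, (↑ua⁻¹ : E₀ →L[ℂ] E₀) (a z) = z := by
    intro z
    have h := congrArg (fun f : E₀ →L[ℂ] E₀ => f z) ua.inv_mul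
    simpa [ContinuousLinearMap.mul_apply, hua] using h
  have hQinj : Function.Injective Q := by
    intro x y hxy
    have h1 : a x = a y := by rw [ha_def]; simp [ContinuousLinearMap.comp_apply, hxy]
    have h2 := congrArg (fun z => (↑ua⁻¹ : E₀ →L[ℂ] E₀) z) h1
    simpa [hax] using h2
  have hQsurj : Function.Surjective Q := by
    have h := (LinearMap.injective_iff_surjective_of_finrank_eq_finrank
      (f := (Q : E₀ →ₗ[ℂ] E)) (by rw [hE₀, hE])).mp hQinj
    exact h
  -- main estimate
  have main : ∀ (B : E →L[ℂ] E) (B₀ : E₀ →L[ℂ] E₀),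
      ‖Q ∘L B₀ - B ∘L Q‖ ≤ δ → ‖B‖ ≤ 1 → ‖B₀‖ ≤ 1 →
      ‖P.symm.toContinuousLinearEquiv.toContinuousLinearMap ∘L B₀ ∘L
          P.toContinuousLinearEquiv.toContinuousLinearMap - B‖ ≤ 20 * δ := by
    intro B B₀ hBQ hB hB₀
    set Tc := P.symm.toContinuousLinearEquiv.toContinuousLinearMap with hTc_def
    set Pc := P.toContinuousLinearEquiv.toContinuousLinearMap with hPc_def
    rcases le_or_gt δ (1/2) with hhalf | hhalf
    · -- quantitative case
      have hW2 : ‖W‖ ≤ 2 := by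
        have h1 : W - 1 = W * (1 - S) := by rw [mul_sub, mul_one, hWmulS]
        have h2 : ‖W - 1‖ ≤ ‖W‖ * ‖1 - S‖ := h1 ▸ norm_mul_le W (1 - S)
        have h3 : ‖1 - S‖ ≤ δ := by rw [norm_sub_rev]; exact hS1
        have h4 : ‖W‖ ≤ ‖W - 1‖ + ‖(1 : E₀ →L[ℂ] E₀)‖ := by
          calc ‖W‖ = ‖W - 1 + 1‖ := by rw [sub_add_cancel]
            _ ≤ ‖W - 1‖ + ‖(1 : E₀ →L[ℂ] E₀)‖ := norm_add_le _ _
        have h5 : ‖(1 : E₀ →L[ℂ] E₀)‖ ≤ 1 := by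
          rw [ContinuousLinearMap.one_def]; exact ContinuousLinearMap.norm_id_le
        nlinarith [norm_nonneg W, norm_nonneg (W - 1), norm_nonneg (1 - S)]
      have hQ2 : ‖Q‖ ≤ 2 := by
        have h1 : ‖Q‖ * ‖Q‖ = ‖a‖ := by
          rw [ha_def]; exact (ContinuousLinearMap.norm_adjoint_comp_self Q).symm
        have h2 : ‖a‖ ≤ δ + 1 := by
          calc ‖a‖ = ‖a - 1 + 1‖ := by rw [sub_add_cancel]
            _ ≤ ‖a - 1‖ + ‖(1 : E₀ →L[ℂ] E₀)‖ := norm_add_le _ _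
            _ ≤ δ + 1 := by
                refine add_le_add hQδ ?_
                rw [ContinuousLinearMap.one_def]; exact ContinuousLinearMap.norm_id_le
        nlinarith [norm_nonneg Q]
      set K : E₀ →L[ℂ] E₀ := B₀ * S - S * B₀ with hK_def
      have hK : ‖K‖ ≤ 2 * δ := by
        have e : K = B₀ * (S - 1) - (S - 1) * B₀ := by
          rw [hK_def, mul_sub, sub_mul, mul_one, one_mul]; abel
        rw [e]
        have t1 : ‖B₀ * (S - 1)‖ ≤ 1 * δ :=
          le_trans (norm_mul_le _ _) (mul_le_mul hB₀ hS1 (norm_nonneg _) zero_le_one)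
        have t2 : ‖(S - 1) * B₀‖ ≤ δ * 1 :=
          le_trans (norm_mul_le _ _) (mul_le_mul hS1 hB₀ (norm_nonneg _) hδ0)
        calc ‖B₀ * (S - 1) - (S - 1) * B₀‖ ≤ ‖B₀ * (S - 1)‖ + ‖(S - 1) * B₀‖ := norm_sub_le _ _
          _ ≤ 2 * δ := by linarith
      have hM : ‖W * K * W‖ ≤ 8 * δ := by
        calc ‖W * K * W‖ ≤ ‖W * K‖ * ‖W‖ := norm_mul_le _ _
          _ ≤ (‖W‖ * ‖K‖) * ‖W‖ :=
              mul_le_mul_of_nonneg_right (norm_mul_le _ _) (norm_nonneg _)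
          _ ≤ (2 * (2 * δ)) * 2 := by
              have h1 : ‖W‖ * ‖K‖ ≤ 2 * (2 * δ) :=
                mul_le_mul hW2 hK (norm_nonneg _) (by norm_num)
              exact mul_le_mul h1 hW2 (norm_nonneg _) (by positivity)
          _ = 8 * δ := by ring
      set X : E₀ →L[ℂ] E := U ∘L B₀ - B ∘L U with hX_def
      have hXeq : X = (Q ∘L B₀ - B ∘L Q) ∘L W + Q ∘L (W * K * W) := by
        ext x
        simp only [hX_def, hU_def, hK_def, ContinuousLinearMap.add_apply,
          ContinuousLinearMap.sub_apply, ContinuousLinearMap.comp_apply,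
          ContinuousLinearMap.mul_apply, map_sub, hWS, hSW]
        abel
      have hX : ‖X‖ ≤ 18 * δ := by
        rw [hXeq]
        calc ‖(Q ∘L B₀ - B ∘L Q) ∘L W + Q ∘L (W * K * W)‖
            ≤ ‖(Q ∘L B₀ - B ∘L Q) ∘L W‖ + ‖Q ∘L (W * K * W)‖ := norm_add_le _ _
          _ ≤ ‖Q ∘L B₀ - B ∘L Q‖ * ‖W‖ + ‖Q‖ * ‖W * K * W‖ :=
              add_le_add (ContinuousLinearMap.opNorm_comp_le _ _)
                (ContinuousLinearMap.opNorm_comp_le _ _)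
          _ ≤ δ * 2 + 2 * (8 * δ) :=
              add_le_add (mul_le_mul hBQ hW2 (norm_nonneg _) hδ0)
                (mul_le_mul hQ2 hM (norm_nonneg _) (by norm_num))
          _ = 18 * δ := by ring
      refine ContinuousLinearMap.opNorm_le_bound _ (by positivity) fun x => ?_
      have hx : (Tc ∘L B₀ ∘L Pc - B) x = X (V.symm x) := by
        simp only [hX_def, ContinuousLinearMap.sub_apply, ContinuousLinearMap.comp_apply,
          hTc_def, hPc_def, hT, hPcc, hUP]
        rfl
      rw [hx]
      calc ‖X (V.symm x)‖ ≤ ‖X‖ * ‖V.symm x‖ := X.le_opNorm _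
        _ = ‖X‖ * ‖x‖ := by rw [hPcnorm]
        _ ≤ (20 * δ) * ‖x‖ := by
            refine mul_le_mul_of_nonneg_right ?_ (norm_nonneg _)
            linarith
    · -- trivial case δ > 1/2
      have h1 : ‖Tc ∘L B₀ ∘L Pc‖ ≤ 1 := by
        refine ContinuousLinearMap.opNorm_le_bound _ zero_le_one fun x => ?_
        rw [ContinuousLinearMap.comp_apply, ContinuousLinearMap.comp_apply, hTc_def, hT, hUnorm]
        calc ‖B₀ (Pc x)‖ ≤ ‖B₀‖ * ‖Pc x‖ := B₀.le_opNorm _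
          _ ≤ 1 * ‖x‖ := by
              rw [hPc_def, hPcc, hPcnorm]
              exact mul_le_mul_of_nonneg_right hB₀ (norm_nonneg _)
      calc ‖Tc ∘L B₀ ∘L Pc - B‖ ≤ ‖Tc ∘L B₀ ∘L Pc‖ + ‖B‖ := norm_sub_le _ _
        _ ≤ 2 := by linarith
        _ ≤ 20 * δ := by linarith
  exact ⟨⟨hQinj, hQsurj⟩, S, hSsa, hinner, hSS, huS, P, hPS, main⟩
end

section
/- Let E be a finite-dimensional complex inner product space and let R be a positive self-adjoint operator with ‖R − id‖ ≤ 1/4. Suppose p̃ is an operator with R² = p̃*p̃, ‖p̃‖ ≤ 2, and suppose a derivation D (linear map satisfying Leibniz on products and D(T*) = (DT)* ) satisfies ‖Dp̃‖ ≤ ε. Then from differentiating R² = p̃* p̃: 2 DR = (Dp̃)* p̃ + p̃* (Dp̃) − (R − id)(DR) − (DR)(R − id), and consequently ‖DR‖ ≤ 4ε. -/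
set_option maxHeartbeats 1000000
set_option synthInstance.maxHeartbeats 400000

/-- Differentiating `R² = p̃* p̃` for a positive self-adjoint `R` with `‖R − id‖ ≤ 1/4`
and `‖p̃‖ ≤ 2`, with a derivation `D` (Leibniz, commuting with adjoints) satisfying
`‖D p̃‖ ≤ ε`: one gets
`2 DR = (D p̃)* p̃ + p̃* (D p̃) − (R − id)(DR) − (DR)(R − id)` and `‖DR‖ ≤ 4ε`. -/
theorem derivative_of_positive_part_bound
    {E : Type*} [NormedAddCommGroup E] [InnerProductSpace ℂ E] [FiniteDimensional ℂ E]
    (R ptilde : E →L[ℂ] E)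
    (hRsa : IsSelfAdjoint R) (hRpos : ∀ x : E, 0 ≤ ((inner ℂ x (R x) : ℂ)).re)
    (hR : ‖R - 1‖ ≤ 1 / 4)
    (hsq : R * R = ContinuousLinearMap.adjoint ptilde * ptilde)
    (hpt : ‖ptilde‖ ≤ 2)
    (D : (E →L[ℂ] E) →ₗ[ℂ] (E →L[ℂ] E))
    (hLeib : ∀ S T : E →L[ℂ] E, D (S * T) = D S * T + S * D T)
    (hstar : ∀ T : E →L[ℂ] E, D (ContinuousLinearMap.adjoint T) =
      ContinuousLinearMap.adjoint (D T))
    (ε : ℝ) (hε : ‖D ptilde‖ ≤ ε) :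
    (2 : ℂ) • D R = ContinuousLinearMap.adjoint (D ptilde) * ptilde +
        ContinuousLinearMap.adjoint ptilde * D ptilde
        - (R - 1) * D R - D R * (R - 1) ∧
      ‖D R‖ ≤ 4 * ε := by
  have hkey : D R * R + R * D R =
      ContinuousLinearMap.adjoint (D ptilde) * ptilde +
        ContinuousLinearMap.adjoint ptilde * D ptilde := by
    have := congrArg D hsq
    rwa [hLeib, hLeib, hstar] at this
  have heq : (2 : ℂ) • D R = ContinuousLinearMap.adjoint (D ptilde) * ptilde +
      ContinuousLinearMap.adjoint ptilde * D ptilde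
      - (R - 1) * D R - D R * (R - 1) := by
    rw [← hkey, two_smul]
    noncomm_ring
  refine ⟨heq, ?_⟩
  have hεnn : 0 ≤ ε := le_trans (norm_nonneg _) hε
  have h1 : ‖ContinuousLinearMap.adjoint (D ptilde) * ptilde‖ ≤ 2 * ε := by
    calc ‖ContinuousLinearMap.adjoint (D ptilde) * ptilde‖
        ≤ ‖ContinuousLinearMap.adjoint (D ptilde)‖ * ‖ptilde‖ := norm_mul_le _ _
      _ ≤ ε * 2 := by
          rw [LinearIsometryEquiv.norm_map ContinuousLinearMap.adjoint]
          exact mul_le_mul hε hpt (norm_nonneg _) hεnn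
      _ = 2 * ε := by ring
  have h2 : ‖ContinuousLinearMap.adjoint ptilde * D ptilde‖ ≤ 2 * ε := by
    calc ‖ContinuousLinearMap.adjoint ptilde * D ptilde‖
        ≤ ‖ContinuousLinearMap.adjoint ptilde‖ * ‖D ptilde‖ := norm_mul_le _ _
      _ ≤ 2 * ε := by
          rw [LinearIsometryEquiv.norm_map ContinuousLinearMap.adjoint]
          exact mul_le_mul hpt hε (norm_nonneg _) (by norm_num)
  have h3 : ‖(R - 1) * D R‖ ≤ (1 / 4) * ‖D R‖ :=
    le_trans (norm_mul_le _ _) (mul_le_mul_of_nonneg_right hR (norm_nonneg _))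
  have h4 : ‖D R * (R - 1)‖ ≤ ‖D R‖ * (1 / 4) :=
    le_trans (norm_mul_le _ _) (mul_le_mul_of_nonneg_left hR (norm_nonneg _))
  have h2norm : ‖(2 : ℂ) • D R‖ = 2 * ‖D R‖ := by
    rw [norm_smul (2:ℂ) (D R)]; norm_num
  have : 2 * ‖D R‖ ≤ 2 * ε + 2 * ε + (1 / 4) * ‖D R‖ + ‖D R‖ * (1 / 4) := by
    rw [← h2norm, heq]
    calc ‖ContinuousLinearMap.adjoint (D ptilde) * ptilde +
          ContinuousLinearMap.adjoint ptilde * D ptilde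
          - (R - 1) * D R - D R * (R - 1)‖
        ≤ ‖ContinuousLinearMap.adjoint (D ptilde) * ptilde +
            ContinuousLinearMap.adjoint ptilde * D ptilde - (R - 1) * D R‖
          + ‖D R * (R - 1)‖ := norm_sub_le _ _
      _ ≤ ‖ContinuousLinearMap.adjoint (D ptilde) * ptilde +
            ContinuousLinearMap.adjoint ptilde * D ptilde‖ + ‖(R - 1) * D R‖
          + ‖D R * (R - 1)‖ := by
            gcongr
            exact norm_sub_le _ _
      _ ≤ ‖ContinuousLinearMap.adjoint (D ptilde) * ptilde‖ +
            ‖ContinuousLinearMap.adjoint ptilde * D ptilde‖ + ‖(R - 1) * D R‖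
          + ‖D R * (R - 1)‖ := by
            gcongr
            exact norm_add_le _ _
      _ ≤ 2 * ε + 2 * ε + (1 / 4) * ‖D R‖ + ‖D R‖ * (1 / 4) := by
            exact add_le_add (add_le_add (add_le_add h1 h2) h3) h4
  linarith
end
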